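/- Let X be a Banach space with a Schauder basis and let t > 1. Then X is not t-distortable if and only if D_t(X) = ω₁. -/

import Mathlib

open Filter Topology

noncomputable section

/-- The first uncountable ordinal `ω₁`. -/
def omega1 : Ordinal := (Cardinal.aleph 1).ord

/-- The combinatorial operation `𝓕[𝓖]` on families of finite subsets of `ℕ`:
all unions `E₁ ∪ ⋯ ∪ Eₙ` with `E₁ < ⋯ < Eₙ` nonempty members of `𝓖` and
`(min Eᵢ)ᵢ ∈ 𝓕`. -/
def famOp (F G : Set (Finset ℕ)) : Set (Finset ℕ) :=
  {E | ∃ (n : ℕ) (Es : ℕ → Finset ℕ),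
    (∀ i < n, Es i ∈ G) ∧ (∀ i < n, (Es i).Nonempty) ∧
    (∀ i j : ℕ, i < j → j < n → ∀ a ∈ Es i, ∀ b ∈ Es j, a < b) ∧
    (Finset.image (fun i => sInf ((Es i : Set ℕ))) (Finset.range n) ∈ F) ∧
    E = (Finset.range n).biUnion Es}

/-- The first Schreier family `𝓢₁ = {E : |E| ≤ min E}`. -/
def schreierOne : Set (Finset ℕ) := {E : Finset ℕ | ∀ n ∈ E, E.card ≤ n}

/-- A system of Schreier families `(𝓢_ξ)` together with the fixed cofinal sequences
`(ξ_n)` used at countable limit ordinals: `𝓢_0 = {∅} ∪ {{n} : n ∈ ℕ}`,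
`𝓢_{ξ+1} = 𝓢₁[𝓢_ξ]`, and at a countable limit `ξ`,
`𝓢_ξ = {E : ∃ n, n ≤ min E ∧ E ∈ 𝓢_{ξ_n}}` where `ξ_n ↑ ξ` and
`𝓢_{ξ_n} ⊆ 𝓢_{ξ_{n+1}}`. -/
structure SchreierSystem where
  S : Ordinal → Set (Finset ℕ)
  seq : Ordinal → ℕ → Ordinal
  S_zero : S 0 = {E : Finset ℕ | E = ∅ ∨ ∃ n : ℕ, E = {n}}
  S_succ : ∀ ξ : Ordinal, S (ξ + 1) = famOp schreierOne (S ξ)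
  seq_strictMono : ∀ ξ : Ordinal, ξ < omega1 → Order.IsSuccLimit ξ → StrictMono (seq ξ)
  seq_lt : ∀ ξ : Ordinal, ξ < omega1 → Order.IsSuccLimit ξ → ∀ n : ℕ, seq ξ n < ξ
  seq_iSup : ∀ ξ : Ordinal, ξ < omega1 → Order.IsSuccLimit ξ → (⨆ n : ℕ, seq ξ n) = ξ
  S_seq_mono : ∀ ξ : Ordinal, ξ < omega1 → Order.IsSuccLimit ξ → ∀ n : ℕ, S (seq ξ n) ⊆ S (seq ξ (n + 1))
  S_limit : ∀ ξ : Ordinal, ξ < omega1 → Order.IsSuccLimit ξ →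
    S ξ = {E : Finset ℕ | ∃ n : ℕ, (∀ m ∈ E, n ≤ m) ∧ E ∈ S (seq ξ n)}

section Distortion

variable {V : Type*} [NormedAddCommGroup V] [NormedSpace ℝ V]

/-- `e` is a Schauder basis of `V`: every vector has a unique expansion
`x = Σ_i a i • e i` (convergence of the partial sums in norm). -/
def IsSchauderBasis (e : ℕ → V) : Prop :=
  ∀ x : V, ∃! a : ℕ → ℝ,
    Filter.Tendsto (fun n => ∑ i ∈ Finset.range n, a i • e i) Filter.atTop (nhds x)

/-- `u` is a block sequence of `e`: a sequence of nonzero vectors belonging to the spans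
of successive finite subsets of the basis. -/
def IsBlockSeqOf (e : ℕ → V) (u : ℕ → V) : Prop :=
  (∀ n, u n ≠ 0) ∧ ∃ E : ℕ → Finset ℕ,
    (∀ m n : ℕ, m < n → ∀ i ∈ E m, ∀ j ∈ E n, i < j) ∧
    ∀ n, u n ∈ Submodule.span ℝ (e '' (E n : Set ℕ))

/-- The closed linear span of the sequence `e` (the space with basis `e`). -/
def spanClosure (e : ℕ → V) : Set V :=
  closure ((Submodule.span ℝ (Set.range e) : Submodule ℝ V) : Set V)

/-- `N` is (the restriction to `Xs` of) a norm equivalent to `‖·‖` on `Xs`. -/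
def IsEquivNormOn (Xs : Set V) (N : V → ℝ) : Prop :=
  (∀ x ∈ Xs, ∀ y ∈ Xs, N (x + y) ≤ N x + N y) ∧
  (∀ (a : ℝ), ∀ x ∈ Xs, N (a • x) = |a| * N x) ∧
  (∃ c C : ℝ, 0 < c ∧ 0 < C ∧ ∀ x ∈ Xs, c * ‖x‖ ≤ N x ∧ N x ≤ C * ‖x‖)

/-- `N` is a `t`-`𝓕` distortion of the space with basis `e`: an equivalent norm such that
every normalized block sequence `(u_i)` admits `E ∈ 𝓕` and vectors `v, w` in
`span{u_i : i ∈ E}` with `‖v‖ = ‖w‖ = 1` and `N v / N w > t`. -/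
def IsFamDistortion (e : ℕ → V) (F : Set (Finset ℕ)) (t : ℝ) (N : V → ℝ) : Prop :=
  IsEquivNormOn (spanClosure e) N ∧
  ∀ u : ℕ → V, IsBlockSeqOf e u → (∀ n, ‖u n‖ = 1) →
    ∃ E : Finset ℕ, E ∈ F ∧ ∃ v w : V,
      v ∈ Submodule.span ℝ (u '' (E : Set ℕ)) ∧ w ∈ Submodule.span ℝ (u '' (E : Set ℕ)) ∧
      ‖v‖ = 1 ∧ ‖w‖ = 1 ∧ t * N w < N v

/-- The space with basis `e` is `t`-distortable: some equivalent norm witnesses, on every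
normalized block sequence, a ratio `> t` on some pair of normalized vectors of the span of
finitely many of its terms. -/
def IsTDistortable (e : ℕ → V) (t : ℝ) : Prop :=
  ∃ N : V → ℝ, IsEquivNormOn (spanClosure e) N ∧
    ∀ u : ℕ → V, IsBlockSeqOf e u → (∀ n, ‖u n‖ = 1) →
      ∃ E : Finset ℕ, ∃ v w : V,
        v ∈ Submodule.span ℝ (u '' (E : Set ℕ)) ∧ w ∈ Submodule.span ℝ (u '' (E : Set ℕ)) ∧
        ‖v‖ = 1 ∧ ‖w‖ = 1 ∧ t * N w < N v

/-- The distortion index `D_t`: the least countable `ξ` such that the space with basis `e`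
is `t`-`𝓢_ξ` distortable, and `ω₁` if there is no such `ξ`. -/
def Dt (SS : SchreierSystem) (e : ℕ → V) (t : ℝ) : Ordinal :=
  sInf ({ξ : Ordinal | ξ < omega1 ∧ ∃ N : V → ℝ, IsFamDistortion e (SS.S ξ) t N} ∪ {omega1})

/-- The index `AD`: the least countable `ξ` such that the space with basis `e` is
`𝓢_ξ` arbitrarily distortable (i.e. `t`-`𝓢_ξ` distortable for every `t ≥ 1`),
and `ω₁` if there is no such `ξ`. -/
def ADidx (SS : SchreierSystem) (e : ℕ → V) : Ordinal :=
  sInf ({ξ : Ordinal | ξ < omega1 ∧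
    ∀ t : ℝ, 1 ≤ t → ∃ N : V → ℝ, IsFamDistortion e (SS.S ξ) t N} ∪ {omega1})

end Distortion

/- ========= Auxiliary development for statement4 ========= -/
section Aux

open Ordinal

lemma omega1_isLimit : Order.IsSuccLimit omega1 :=
  Cardinal.isSuccLimit_ord (Cardinal.aleph0_le_aleph 1)

lemma ord_lt_add_one (η : Ordinal) : η < η + 1 := by
  rw [Ordinal.add_one_eq_succ]; exact Order.lt_succ η

/-! ### Rank machinery -/

theorem acc_of_relMap {α β : Sort*} {r : α → α → Prop} {s : β → β → Prop} {f : α → β}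
    (hf : ∀ a b, r a b → s (f a) (f b)) {b : β} (hb : Acc s b) :
    ∀ a, f a = b → Acc r a := by
  induction hb with
  | intro b _ ih =>
    intro a ha
    subst ha
    exact Acc.intro a fun a' ha' => ih (f a') (hf a' a ha') a' rfl

universe uu

theorem rank_le_of_relMap {α β : Type uu} {r : α → α → Prop} {s : β → β → Prop} {f : α → β}
    (hf : ∀ a b, r a b → s (f a) (f b)) {a : α} (ha : Acc r a) :
    ∀ (hb : Acc s (f a)), ha.rank ≤ hb.rank := by
  induction ha with
  | intro a hacc ih =>
    intro hb
    rw [Acc.rank_eq]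
    refine Ordinal.iSup_le_iff.mpr ?_
    rintro ⟨b, hrb⟩
    have hs : s (f b) (f a) := hf _ _ hrb
    refine le_trans (Order.succ_le_succ (ih b hrb (hb.inv hs))) (Order.succ_le_of_lt ?_)
    exact Acc.rank_lt_of_rel hb hs

theorem rank_lt_omega1 {α : Type uu} [Countable α] {r : α → α → Prop} {a : α} (ha : Acc r a) :
    ha.rank < omega1 := by
  induction ha with
  | intro a hacc ih =>
    rw [Acc.rank_eq]
    refine Ordinal.iSup_lt_ord ?_ ?_
    · have h1 : omega1.cof = Cardinal.aleph 1 := Cardinal.isRegular_aleph_one.cof_eq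
      rw [h1]
      exact lt_of_le_of_lt Cardinal.mk_le_aleph0 Cardinal.aleph0_lt_aleph_one
    · rintro ⟨b, hrb⟩
      exact omega1_isLimit.succ_lt (ih b hrb)

theorem wf_of_no_chain {α : Type*} {r : α → α → Prop}
    (h : ∀ f : ℕ → α, ¬ ∀ n, r (f (n + 1)) (f n)) : WellFounded r := by
  by_contra hwf
  have hex : ∃ a, ¬ Acc r a := by
    by_contra h'
    push_neg at h'
    exact hwf ⟨h'⟩
  obtain ⟨a, ha⟩ := hex
  have step : ∀ x : {x // ¬ Acc r x}, ∃ y : {x // ¬ Acc r x}, r y.val x.val := by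
    rintro ⟨x, hx⟩
    obtain ⟨b, hb, hrb⟩ := exists_not_acc_lt_of_not_acc hx
    exact ⟨⟨b, hb⟩, hrb⟩
  choose g hg using step
  let f : ℕ → {x // ¬ Acc r x} := fun n => Nat.rec ⟨a, ha⟩ (fun _ x => g x) n
  exact h (fun n => (f n).val) (fun n => hg (f n))

/-! ### Basic facts about `sInf` on finsets of naturals -/

lemma finset_sInf_mem {F : Finset ℕ} (hF : F.Nonempty) : sInf (F : Set ℕ) ∈ F := by
  have h : (F : Set ℕ).Nonempty := by exact_mod_cast hF
  exact_mod_cast Nat.sInf_mem h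

lemma finset_sInf_le {F : Finset ℕ} {a : ℕ} (ha : a ∈ F) : sInf (F : Set ℕ) ≤ a :=
  Nat.sInf_le (by exact_mod_cast ha)

lemma sInf_image_addRight (F : Finset ℕ) (hF : F.Nonempty) (s : ℕ) :
    sInf ((F.image (· + s) : Finset ℕ) : Set ℕ) = sInf (F : Set ℕ) + s := by
  apply le_antisymm
  · exact finset_sInf_le (Finset.mem_image_of_mem _ (finset_sInf_mem hF))
  · have himg : (F.image (· + s)).Nonempty := hF.image _
    obtain ⟨a, haF, hae⟩ := Finset.mem_image.mp (finset_sInf_mem himg)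
    calc sInf (F : Set ℕ) + s ≤ a + s := by
          have := finset_sInf_le haF; omega
      _ = sInf ((F.image (· + s) : Finset ℕ) : Set ℕ) := hae

lemma schreierOne_shift {E : Finset ℕ} (hE : E ∈ schreierOne) (s : ℕ) :
    E.image (· + s) ∈ schreierOne := by
  intro n hn
  obtain ⟨a, haE, rfl⟩ := Finset.mem_image.mp hn
  calc (E.image (· + s)).card ≤ E.card := Finset.card_image_le
    _ ≤ a := hE a haE
    _ ≤ a + s := Nat.le_add_right _ _

/-! ### Schreier family combinatorics -/

lemma SchreierSystem.shift_mem (SS : SchreierSystem) :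
    ∀ ξ : Ordinal, ξ < omega1 → ∀ (s : ℕ) (E : Finset ℕ),
      E ∈ SS.S ξ → E.image (· + s) ∈ SS.S ξ := by
  intro ξ
  induction ξ using Ordinal.induction with
  | _ ξ ih =>
    intro hξ s E hE
    rcases Ordinal.zero_or_succ_or_isSuccLimit ξ with h0 | ⟨η, rfl⟩ | hlim
    · subst h0
      rw [SS.S_zero] at hE ⊢
      rcases hE with rfl | ⟨n, rfl⟩
      · left; simp
      · right; exact ⟨n + s, by simp⟩
    · have hη1 : Order.succ η = η + 1 := (Ordinal.add_one_eq_succ η).symm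
      rw [hη1] at hξ hE ⊢
      have hηlt : η < η + 1 := ord_lt_add_one η
      have hηω : η < omega1 := lt_trans hηlt hξ
      rw [SS.S_succ] at hE ⊢
      obtain ⟨n, Es, hmem, hne, hord, hmins, rfl⟩ := hE
      refine ⟨n, fun i => (Es i).image (· + s), ?_, ?_, ?_, ?_, ?_⟩
      · intro i hi; exact ih η hηlt hηω s _ (hmem i hi)
      · intro i hi; exact (hne i hi).image _
      · intro i j hij hjn a ha b hb
        obtain ⟨a', ha', rfl⟩ := Finset.mem_image.mp ha
        obtain ⟨b', hb', rfl⟩ := Finset.mem_image.mp hb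
        have := hord i j hij hjn a' ha' b' hb'
        omega
      · have heq : Finset.image
            (fun i => sInf (((Es i).image (· + s) : Finset ℕ) : Set ℕ)) (Finset.range n)
            = (Finset.image (fun i => sInf ((Es i : Finset ℕ) : Set ℕ)) (Finset.range n)).image
                (· + s) := by
          rw [Finset.image_image]
          apply Finset.image_congr
          intro i hi
          simp only [Function.comp_apply]
          exact sInf_image_addRight _ (hne i (Finset.mem_range.mp hi)) s
        rw [heq]
        exact schreierOne_shift hmins s
      · rw [Finset.biUnion_image]
    · rw [SS.S_limit ξ hξ hlim] at hE ⊢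
      obtain ⟨n, hmin, hEn⟩ := hE
      have hlt : SS.seq ξ n < ξ := SS.seq_lt ξ hξ hlim n
      refine ⟨n, ?_, ih _ hlt (lt_trans hlt hξ) s _ hEn⟩
      rintro m hm
      obtain ⟨a, ha, rfl⟩ := Finset.mem_image.mp hm
      have := hmin a ha
      omega

lemma SchreierSystem.singleton_mem (SS : SchreierSystem) :
    ∀ ξ : Ordinal, ξ < omega1 → ∀ a : ℕ, 1 ≤ a → ({a} : Finset ℕ) ∈ SS.S ξ := by
  intro ξ
  induction ξ using Ordinal.induction with
  | _ ξ ih =>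
    intro hξ a ha
    rcases Ordinal.zero_or_succ_or_isSuccLimit ξ with h0 | ⟨η, rfl⟩ | hlim
    · subst h0
      rw [SS.S_zero]
      exact Or.inr ⟨a, rfl⟩
    · have hη1 : Order.succ η = η + 1 := (Ordinal.add_one_eq_succ η).symm
      rw [hη1] at hξ ⊢
      have hηlt : η < η + 1 := ord_lt_add_one η
      have hηω : η < omega1 := lt_trans hηlt hξ
      rw [SS.S_succ]
      refine ⟨1, fun _ => {a}, ?_, ?_, ?_, ?_, ?_⟩
      · intro i _; exact ih η hηlt hηω a ha
      · intro i _; exact Finset.singleton_nonempty a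
      · intro i j hij hjn a' _ b' _; omega
      · have heq : Finset.image (fun _ : ℕ => sInf (({a} : Finset ℕ) : Set ℕ))
            (Finset.range 1) = {a} := by
          simp
        rw [heq]
        intro m hm
        simp only [Finset.mem_singleton] at hm
        subst hm
        simpa using ha
      · simp
    · rw [SS.S_limit ξ hξ hlim]
      have hlt : SS.seq ξ 1 < ξ := SS.seq_lt ξ hξ hlim 1
      exact ⟨1, by simpa using ha, ih _ hlt (lt_trans hlt hξ) a ha⟩

lemma SchreierSystem.two_blocks_mem (SS : SchreierSystem) {ξ : Ordinal}
    (hξ : ξ < omega1) (hξ1 : ξ + 1 < omega1)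
    {F : Finset ℕ} (hF : F ∈ SS.S ξ) :
    insert 2 (F.image (· + 3)) ∈ SS.S (ξ + 1) := by
  classical
  rcases F.eq_empty_or_nonempty with rfl | hFne
  · simpa using SS.singleton_mem (ξ + 1) hξ1 2 (by norm_num)
  · rw [SS.S_succ]
    refine ⟨2, fun i => if i = 0 then {2} else F.image (· + 3), ?_, ?_, ?_, ?_, ?_⟩
    · intro i hi
      rcases eq_or_ne i 0 with rfl | h
      · simpa using SS.singleton_mem ξ hξ 2 (by norm_num)
      · simpa [h] using SS.shift_mem ξ hξ 3 F hF
    · intro i hi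
      rcases eq_or_ne i 0 with rfl | h
      · simp
      · simpa [h] using hFne.image (· + 3)
    · intro i j hij hjn a ha b hb
      have hi0 : i = 0 := by omega
      have hj1 : j = 1 := by omega
      subst hi0; subst hj1
      have ha2 : a = 2 := by simpa using ha
      have hb' : ∃ b', b' ∈ F ∧ b' + 3 = b := by
        have : b ∈ F.image (· + 3) := by simpa using hb
        simpa using Finset.mem_image.mp this
      obtain ⟨b', _, rfl⟩ := hb'
      omega
    · have h0 : sInf ((({2} : Finset ℕ)) : Set ℕ) = 2 := by simp
      have h1 : sInf ((F.image (· + 3) : Finset ℕ) : Set ℕ) = sInf (F : Set ℕ) + 3 :=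
        sInf_image_addRight F hFne 3
      have hr2 : Finset.range 2 = {0, 1} := rfl
      have heq : Finset.image
          (fun i => sInf (((if i = 0 then {2} else F.image (· + 3)) : Finset ℕ) : Set ℕ))
          (Finset.range 2) = {2, sInf (F : Set ℕ) + 3} := by
        rw [hr2, Finset.image_insert, Finset.image_singleton]
        rw [if_pos rfl, if_neg one_ne_zero, h0, h1]
      rw [heq]
      intro m hm
      have hcard : ({2, sInf (F : Set ℕ) + 3} : Finset ℕ).card ≤ 2 := by
        apply le_trans (Finset.card_insert_le _ _)
        simp
      simp only [Finset.mem_insert, Finset.mem_singleton] at hm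
      rcases hm with rfl | rfl
      · exact hcard
      · omega
    · ext x
      simp only [Finset.mem_insert, Finset.mem_biUnion, Finset.mem_range]
      constructor
      · rintro (rfl | hx)
        · exact ⟨0, by omega, by simp⟩
        · exact ⟨1, by omega, by simpa using hx⟩
      · rintro ⟨i, hi, hx⟩
        rcases eq_or_ne i 0 with rfl | h
        · exact Or.inl (by simpa using hx)
        · exact Or.inr (by simpa [h] using hx)

lemma SchreierSystem.limit_shift_mem (SS : SchreierSystem) {ξ : Ordinal}
    (hξ : ξ < omega1) (hlim : Order.IsSuccLimit ξ) (n : ℕ) {F : Finset ℕ}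
    (hF : F ∈ SS.S (SS.seq ξ n)) : F.image (· + n) ∈ SS.S ξ := by
  rw [SS.S_limit ξ hξ hlim]
  have hlt : SS.seq ξ n < ξ := SS.seq_lt ξ hξ hlim n
  refine ⟨n, ?_, SS.shift_mem _ (lt_trans hlt hξ) n F hF⟩
  rintro m hm
  obtain ⟨a, _, rfl⟩ := Finset.mem_image.mp hm
  omega

end Aux

/-! ### Trees of finite increasing sequences -/

section TreeAux

/-- One-step extension relation on the nodes of a tree of lists. -/
def extStep {α : Type} (T : Set (List α)) (a b : {l : List α // l ∈ T}) : Prop :=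
  ∃ x : α, a.val = b.val ++ [x]

/-- The same relation lifted to an arbitrary universe. -/
def liftStep {α : Type} (T : Set (List α)) :
    ULift.{uu} {l : List α // l ∈ T} → ULift.{uu} {l : List α // l ∈ T} → Prop :=
  InvImage (extStep T) ULift.down

/-- The tree of strictly increasing lists whose underlying finsets belong to `C`. -/
def sTree (C : Set (Finset ℕ)) : Set (List ℕ) :=
  {l | l.Pairwise (· < ·) ∧ l.toFinset ∈ C}

lemma sorted_append_singleton {l : List ℕ} (hl : l.Pairwise (· < ·)) {m : ℕ}
    (hm : ∀ a ∈ l, a < m) : (l ++ [m]).Pairwise (· < ·) := by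
  rw [List.pairwise_append]
  exact ⟨hl, List.pairwise_singleton _ _, fun a ha b hb => by
    simp only [List.mem_singleton] at hb; subst hb; exact hm a ha⟩

lemma toFinset_append_singleton (l : List ℕ) (m : ℕ) :
    (l ++ [m]).toFinset = insert m l.toFinset := by
  ext x
  simp [List.mem_append, or_comm]

/-- Key combinatorial lower bound: if all (shifted) members of `𝓢_ξ` can be appended to a
node of the tree of `C`, then that node has rank at least `ξ`. -/
theorem schreier_rank_lower_bound (SS : SchreierSystem) (C : Set (Finset ℕ)) :
    ∀ ξ : Ordinal.{0}, ξ < omega1 →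
      ∀ (l : List ℕ) (hl : l ∈ sTree C) (s : ℕ), (∀ a ∈ l, a < s) →
        (∀ F ∈ SS.S ξ, l.toFinset ∪ F.image (· + s) ∈ C) →
        ∀ (hacc : Acc (liftStep.{0} (sTree C)) (ULift.up ⟨l, hl⟩)), ξ ≤ hacc.rank := by
  intro ξ
  induction ξ using Ordinal.induction with
  | _ ξ ih =>
    intro hξ l hl s hs hC hacc
    rcases Ordinal.zero_or_succ_or_isSuccLimit ξ with h0 | ⟨η, rfl⟩ | hlim
    · subst h0; exact zero_le
    · have hη1 : Order.succ η = η + 1 := (Ordinal.add_one_eq_succ η).symm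
      rw [hη1] at hξ ih ⊢
      rw [hη1] at hC
      have hηlt : η < η + 1 := ord_lt_add_one η
      have hηω : η < omega1 := lt_trans hηlt hξ
      -- the child node `l ++ [s+2]`
      have hmem2 : ({2} : Finset ℕ) ∈ SS.S (η + 1) := SS.singleton_mem _ hξ 2 (by norm_num)
      have hchild : (l ++ [s + 2]).toFinset ∈ C := by
        have h := hC {2} hmem2
        have heq : l.toFinset ∪ ({2} : Finset ℕ).image (· + s) = (l ++ [s + 2]).toFinset := by
          rw [toFinset_append_singleton, Finset.image_singleton]
          ext x
          simp only [Finset.mem_union, Finset.mem_singleton, Finset.mem_insert]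
          constructor
          · rintro (hx | rfl)
            · exact Or.inr hx
            · exact Or.inl (by omega)
          · rintro (rfl | hx)
            · exact Or.inr (by omega)
            · exact Or.inl hx
        rwa [heq] at h
      have hl' : (l ++ [s + 2]) ∈ sTree C :=
        ⟨sorted_append_singleton hl.1 (fun a ha => by have := hs a ha; omega), hchild⟩
      have hstep : liftStep.{0} (sTree C) (ULift.up ⟨l ++ [s + 2], hl'⟩) (ULift.up ⟨l, hl⟩) :=
        ⟨s + 2, rfl⟩
      -- IH on the child
      have hC' : ∀ F ∈ SS.S η, (l ++ [s + 2]).toFinset ∪ F.image (· + (s + 3)) ∈ C := by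
        intro F hF
        have h := hC _ (SS.two_blocks_mem hηω hξ hF)
        have heq : l.toFinset ∪ (insert 2 (F.image (· + 3))).image (· + s)
            = (l ++ [s + 2]).toFinset ∪ F.image (· + (s + 3)) := by
          rw [toFinset_append_singleton, Finset.image_insert, Finset.image_image]
          ext x
          simp only [Finset.mem_union, Finset.mem_insert, Finset.mem_image,
            Function.comp_apply]
          constructor
          · rintro (hx | (rfl | ⟨a, ha, rfl⟩))
            · exact Or.inl (Or.inr hx)
            · exact Or.inl (Or.inl (by omega))
            · exact Or.inr ⟨a, ha, by omega⟩
          · rintro ((rfl | hx) | ⟨a, ha, rfl⟩)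
            · exact Or.inr (Or.inl (by omega))
            · exact Or.inl hx
            · exact Or.inr (Or.inr ⟨a, ha, by omega⟩)
        rwa [heq] at h
      have hrank : η ≤ (hacc.inv hstep).rank :=
        ih η hηlt hηω (l ++ [s + 2]) hl' (s + 3)
          (fun a ha => by
            rcases List.mem_append.mp ha with h' | h'
            · have := hs a h'; omega
            · simp only [List.mem_singleton] at h'; omega)
          hC' (hacc.inv hstep)
      rw [Ordinal.add_one_eq_succ, Order.succ_le_iff]
      exact lt_of_le_of_lt hrank (Acc.rank_lt_of_rel hacc hstep)
    · rw [← SS.seq_iSup ξ hξ hlim]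
      refine Ordinal.iSup_le_iff.mpr ?_
      intro n
      have hlt : SS.seq ξ n < ξ := SS.seq_lt ξ hξ hlim n
      refine ih _ hlt (lt_trans hlt hξ) l hl (s + n)
        (fun a ha => by have := hs a ha; omega) ?_ hacc
      intro F hF
      have h := hC _ (SS.limit_shift_mem hξ hlim n hF)
      rw [Finset.image_image] at h
      have heq : ((· + s) ∘ (· + n) : ℕ → ℕ) = (· + (s + n)) := by
        funext a; simp only [Function.comp_apply]; omega
      rwa [heq] at h

end TreeAux

/-! ### Analytic auxiliary lemmas -/

section AnalysisAux

variable {V : Type*} [NormedAddCommGroup V] [NormedSpace ℝ V]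

/-- Evaluation of a list of rational coefficients against the basis sequence. -/
def evQ (e : ℕ → V) (q : List ℚ) : V :=
  ∑ i ∈ Finset.range q.length, ((q.getD i 0 : ℚ) : ℝ) • e i

lemma evQ_approx (e : ℕ → V) {x : V} (hx : x ∈ Submodule.span ℝ (Set.range e))
    {ε : ℝ} (hε : 0 < ε) : ∃ q : List ℚ, ‖x - evQ e q‖ < ε := by
  classical
  obtain ⟨c, hc⟩ := Finsupp.mem_span_range_iff_exists_finsupp.mp hx
  obtain ⟨n, hn⟩ : ∃ n, ∀ i ∈ c.support, i < n :=
    ⟨(c.support.sup id) + 1, fun i hi => Nat.lt_succ_of_le (Finset.le_sup (f := id) hi)⟩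
  have hx' : x = ∑ i ∈ Finset.range n, c i • e i := by
    rw [← hc, Finsupp.sum]
    apply Finset.sum_subset
    · intro i hi; exact Finset.mem_range.mpr (hn i hi)
    · intro i _ hi
      rw [Finsupp.notMem_support_iff.mp hi, zero_smul]
  set M : ℝ := ∑ i ∈ Finset.range n, ‖e i‖ + 1 with hM
  have hM0 : 0 < M := by positivity
  have hq : ∀ i : ℕ, ∃ qq : ℚ, |c i - (qq : ℝ)| < ε / M :=
    fun i => exists_rat_near (c i) (by positivity)
  choose qf hqf using hq
  refine ⟨(List.range n).map qf, ?_⟩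
  have hlen : ((List.range n).map qf).length = n := by simp
  have hget : ∀ i, i < n → ((List.range n).map qf).getD i 0 = qf i := by
    intro i hi
    have h1 : i < ((List.range n).map qf).length := by rw [hlen]; exact hi
    rw [List.getD_eq_getElem _ _ h1]
    simp
  have hev : evQ e ((List.range n).map qf) = ∑ i ∈ Finset.range n, ((qf i : ℚ) : ℝ) • e i := by
    rw [evQ, hlen]
    exact Finset.sum_congr rfl fun i hi => by rw [hget i (Finset.mem_range.mp hi)]
  rw [hev, hx', ← Finset.sum_sub_distrib]
  have hterm : ∀ i ∈ Finset.range n,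
      c i • e i - ((qf i : ℚ) : ℝ) • e i = (c i - (qf i : ℝ)) • e i := by
    intro i _; rw [sub_smul]
  rw [Finset.sum_congr rfl hterm]
  have hSM : ∑ i ∈ Finset.range n, ‖e i‖ < M := by rw [hM]; linarith
  calc ‖∑ i ∈ Finset.range n, (c i - (qf i : ℝ)) • e i‖
      ≤ ∑ i ∈ Finset.range n, ‖(c i - (qf i : ℝ)) • e i‖ := norm_sum_le _ _
    _ ≤ ∑ i ∈ Finset.range n, (ε / M) * ‖e i‖ := by
        apply Finset.sum_le_sum
        intro i _
        rw [norm_smul, Real.norm_eq_abs]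
        exact mul_le_mul_of_nonneg_right (le_of_lt (hqf i)) (norm_nonneg _)
    _ = (ε / M) * ∑ i ∈ Finset.range n, ‖e i‖ := by rw [Finset.mul_sum]
    _ < (ε / M) * M := by
        apply mul_lt_mul_of_pos_left hSM
        positivity
    _ = ε := div_mul_cancel₀ ε (ne_of_gt hM0)

open scoped Classical in
/-- A choice of rational approximation at scale `2⁻¹ ^ k`. -/
def qIdxFun (e : ℕ → V) (x : V) (k : ℕ) : List ℚ :=
  if h : ∃ q : List ℚ, ‖x - evQ e q‖ ≤ (2⁻¹ : ℝ) ^ k then h.choose else []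

open scoped Classical in
lemma qIdxFun_spec (e : ℕ → V) {x : V} (hx : x ∈ Submodule.span ℝ (Set.range e)) (k : ℕ) :
    ‖x - evQ e (qIdxFun e x k)‖ ≤ (2⁻¹ : ℝ) ^ k := by
  have hex : ∃ q : List ℚ, ‖x - evQ e q‖ ≤ (2⁻¹ : ℝ) ^ k := by
    obtain ⟨q, hq⟩ := evQ_approx e hx (ε := (2⁻¹ : ℝ) ^ k) (by positivity)
    exact ⟨q, le_of_lt hq⟩
  rw [qIdxFun, dif_pos hex]
  exact hex.choose_spec

lemma mem_spanClosure_of_mem_span {e : ℕ → V} {x : V}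
    (hx : x ∈ Submodule.span ℝ (Set.range e)) : x ∈ spanClosure e :=
  subset_closure hx

/-- Convergence of the values of an equivalent norm along convergent sequences in the span. -/
lemma tendsto_equivNorm {e : ℕ → V} {N : V → ℝ} (hN : IsEquivNormOn (spanClosure e) N)
    {v : ℕ → V} {x : V}
    (hv : ∀ᶠ n in Filter.atTop, v n ∈ Submodule.span ℝ (Set.range e))
    (hx : x ∈ Submodule.span ℝ (Set.range e))
    (h : Filter.Tendsto v Filter.atTop (nhds x)) :
    Filter.Tendsto (fun n => N (v n)) Filter.atTop (nhds (N x)) := by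
  obtain ⟨htri, hhom, c, C, hc, hC, hb⟩ := hN
  have key : ∀ a b : V, a ∈ Submodule.span ℝ (Set.range e) →
      b ∈ Submodule.span ℝ (Set.range e) → N a - N b ≤ C * ‖a - b‖ := by
    intro a b ha hb'
    have hab : a - b ∈ Submodule.span ℝ (Set.range e) := Submodule.sub_mem _ ha hb'
    have h1 : N a ≤ N (a - b) + N b := by
      have h2 := htri (a - b) (mem_spanClosure_of_mem_span hab) b (mem_spanClosure_of_mem_span hb')
      rwa [sub_add_cancel] at h2
    have h2 : N (a - b) ≤ C * ‖a - b‖ := (hb _ (mem_spanClosure_of_mem_span hab)).2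
    linarith
  have habs : ∀ᶠ n in Filter.atTop, ‖N (v n) - N x‖ ≤ C * ‖v n - x‖ := by
    filter_upwards [hv] with n hn
    rw [Real.norm_eq_abs, abs_sub_le_iff]
    refine ⟨key _ _ hn hx, ?_⟩
    have h2 := key x (v n) hx hn
    rwa [norm_sub_rev x (v n)] at h2
  have hnorm0 : Filter.Tendsto (fun n => C * ‖v n - x‖) Filter.atTop (nhds 0) := by
    have h3 : Filter.Tendsto (fun n => ‖v n - x‖) Filter.atTop (nhds 0) := by
      have h4 := (h.sub (tendsto_const_nhds (x := x))).norm
      simpa using h4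
    simpa using h3.const_mul C
  have h5 : Filter.Tendsto (fun n => N (v n) - N x) Filter.atTop (nhds 0) :=
    squeeze_zero_norm' habs hnorm0
  have h6 := h5.add_const (N x)
  simpa using h6

end AnalysisAux

/-! ### The universal countable tree -/

section UTreeSection

variable {V : Type*} [NormedAddCommGroup V] [NormedSpace ℝ V]

/-- Letters of the universal countable tree. -/
abbrev ULetter : Type := List (List ℚ) × Finset ℕ

/-- No distorted pair in the span of `s`. -/
def noPairIn (N : V → ℝ) (t : ℝ) (s : Set V) : Prop :=
  ¬ ∃ v w : V, v ∈ Submodule.span ℝ s ∧ w ∈ Submodule.span ℝ s ∧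
    ‖v‖ = 1 ∧ ‖w‖ = 1 ∧ t * N w < N v

/-- The universal countable tree of approximated bad normalized block tuples. -/
def uTree (e : ℕ → V) (N : V → ℝ) (t : ℝ) : Set (List ULetter) :=
  {w | ∃ x : ℕ → V,
    (∀ i, i < w.length → x i ∈ Submodule.span ℝ (e '' (((w.getD i ([], ∅)).2 : Finset ℕ) : Set ℕ))) ∧
    (∀ i, i < w.length → ‖x i‖ = 1) ∧
    (∀ i j : ℕ, i < j → j < w.length →
      ∀ a ∈ (w.getD i ([], ∅)).2, ∀ b ∈ (w.getD j ([], ∅)).2, a < b) ∧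
    (∀ k, k < w.length → ∀ i, i ≤ k →
      ‖x i - evQ e ((w.getD k ([], ∅)).1.getD i [])‖ ≤ (2⁻¹ : ℝ) ^ k) ∧
    noPairIn N t (x '' {i : ℕ | i < w.length})}

end UTreeSection

section UTreeWF

variable {V : Type*} [NormedAddCommGroup V] [NormedSpace ℝ V] [CompleteSpace V]

lemma uTree_wf {e : ℕ → V} {N : V → ℝ} {t : ℝ}
    (hNd : ∀ u : ℕ → V, IsBlockSeqOf e u → (∀ n, ‖u n‖ = 1) →
      ∃ E : Finset ℕ, ∃ v w : V,
        v ∈ Submodule.span ℝ (u '' (E : Set ℕ)) ∧ w ∈ Submodule.span ℝ (u '' (E : Set ℕ)) ∧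
        ‖v‖ = 1 ∧ ‖w‖ = 1 ∧ t * N w < N v)
    (hNe : IsEquivNormOn (spanClosure e) N) :
    WellFounded (extStep (uTree e N t)) := by
  apply wf_of_no_chain
  intro f hf
  -- lengths grow by one at each step
  have hlen : ∀ n, (f n).val.length = (f 0).val.length + n := by
    intro n
    induction n with
    | zero => rfl
    | succ n ihn =>
      obtain ⟨a, ha⟩ := hf n
      rw [ha, List.length_append, ihn, List.length_singleton]
      omega
  set L0 := (f 0).val.length with hL0
  have hpref : ∀ m n, m ≤ n → (f m).val <+: (f n).val := by
    intro m n hmn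
    induction n with
    | zero => rw [Nat.le_zero.mp hmn]
    | succ n ihn =>
      rcases Nat.lt_or_ge m (n + 1) with h | h
      · obtain ⟨a, ha⟩ := hf n
        rw [ha]
        exact (ihn (Nat.lt_succ_iff.mp h)).trans (List.prefix_append _ _)
      · have hm : m = n + 1 := le_antisymm hmn h
        subst hm
        exact List.prefix_refl _
  -- the letters of the branch
  set ℓ : ℕ → ULetter := fun k => (f (k + 1)).val.getD k ([], ∅) with hℓ
  have hgetD : ∀ {l₁ l₂ : List ULetter}, l₁ <+: l₂ → ∀ {k : ℕ}, k < l₁.length →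
      l₂.getD k ([], ∅) = l₁.getD k ([], ∅) := by
    rintro l₁ l₂ ⟨tl, rfl⟩ k hk
    exact List.getD_append _ _ _ _ hk
  have hlet : ∀ n k, k < L0 + n → (f n).val.getD k ([], ∅) = ℓ k := by
    intro n k hk
    rcases le_or_gt n (k + 1) with h | h
    · exact (hgetD (hpref n (k + 1) h) (by rw [hlen n]; exact hk)).symm
    · exact hgetD (hpref (k + 1) n (by omega)) (by rw [hlen (k + 1)]; omega)
  -- witnesses for each node
  have hw : ∀ n, ∃ x : ℕ → V,
      (∀ i, i < (f n).val.length →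
        x i ∈ Submodule.span ℝ (e '' ((((f n).val.getD i ([], ∅)).2 : Finset ℕ) : Set ℕ))) ∧
      (∀ i, i < (f n).val.length → ‖x i‖ = 1) ∧
      (∀ i j : ℕ, i < j → j < (f n).val.length →
        ∀ a ∈ ((f n).val.getD i ([], ∅)).2, ∀ b ∈ ((f n).val.getD j ([], ∅)).2, a < b) ∧
      (∀ k, k < (f n).val.length → ∀ i, i ≤ k →
        ‖x i - evQ e (((f n).val.getD k ([], ∅)).1.getD i [])‖ ≤ (2⁻¹ : ℝ) ^ k) ∧
      noPairIn N t (x '' {i : ℕ | i < (f n).val.length}) := fun n => (f n).2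
  choose x hx1 hx2 hx3 hx4 hx5 using hw
  -- the approximation estimate in terms of branch letters
  have happrox : ∀ i k n, i ≤ k → k < L0 + n →
      ‖x n i - evQ e ((ℓ k).1.getD i [])‖ ≤ (2⁻¹ : ℝ) ^ k := by
    intro i k n hik hk
    have h4 := hx4 n k (by rw [hlen n]; exact hk) i hik
    rwa [hlet n k hk] at h4
  -- Cauchy in each coordinate
  have hcauchy : ∀ i, CauchySeq (fun n => x n i) := by
    intro i
    rw [Metric.cauchySeq_iff]
    intro ε hε
    obtain ⟨k0, hk0⟩ := exists_pow_lt_of_lt_one (show (0 : ℝ) < ε / 2 by linarith)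
      (show (2⁻¹ : ℝ) < 1 by norm_num)
    set k := max k0 i with hkdef
    have hkb : (2⁻¹ : ℝ) ^ k ≤ (2⁻¹ : ℝ) ^ k0 :=
      pow_le_pow_of_le_one (by norm_num) (by norm_num) (le_max_left _ _)
    refine ⟨k + 1, fun m hm n hn => ?_⟩
    have h1 : ‖x m i - evQ e ((ℓ k).1.getD i [])‖ ≤ (2⁻¹ : ℝ) ^ k :=
      happrox i k m (le_max_right _ _) (by omega)
    have h2 : ‖x n i - evQ e ((ℓ k).1.getD i [])‖ ≤ (2⁻¹ : ℝ) ^ k :=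
      happrox i k n (le_max_right _ _) (by omega)
    calc dist (x m i) (x n i)
        ≤ dist (x m i) (evQ e ((ℓ k).1.getD i []))
          + dist (evQ e ((ℓ k).1.getD i [])) (x n i) := dist_triangle _ _ _
      _ = ‖x m i - evQ e ((ℓ k).1.getD i [])‖ + ‖x n i - evQ e ((ℓ k).1.getD i [])‖ := by
          rw [dist_eq_norm, dist_comm, dist_eq_norm]
      _ ≤ (2⁻¹ : ℝ) ^ k + (2⁻¹ : ℝ) ^ k := add_le_add h1 h2
      _ ≤ (2⁻¹ : ℝ) ^ k0 + (2⁻¹ : ℝ) ^ k0 := add_le_add hkb hkb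
      _ < ε := by linarith
  -- limits
  have hzex : ∀ i, ∃ z : V, Filter.Tendsto (fun n => x n i) Filter.atTop (nhds z) :=
    fun i => cauchySeq_tendsto_of_complete (hcauchy i)
  choose z hz using hzex
  have hzmem : ∀ i, z i ∈ Submodule.span ℝ (e '' (((ℓ i).2 : Finset ℕ) : Set ℕ)) := by
    intro i
    haveI : FiniteDimensional ℝ (Submodule.span ℝ (e '' (((ℓ i).2 : Finset ℕ) : Set ℕ))) :=
      FiniteDimensional.span_of_finite ℝ ((Finset.finite_toSet _).image e)
    have hclosed : IsClosed ((Submodule.span ℝ (e '' (((ℓ i).2 : Finset ℕ) : Set ℕ)) :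
        Submodule ℝ V) : Set V) := Submodule.closed_of_finiteDimensional _
    refine hclosed.mem_of_tendsto (hz i) ?_
    filter_upwards [Filter.eventually_ge_atTop (i + 1)] with n hn
    have h1 := hx1 n i (by rw [hlen n]; omega)
    rwa [hlet n i (by omega)] at h1
  have hznorm : ∀ i, ‖z i‖ = 1 := by
    intro i
    have h1 : Filter.Tendsto (fun n => ‖x n i‖) Filter.atTop (nhds ‖z i‖) := (hz i).norm
    have h2 : Filter.Tendsto (fun n => ‖x n i‖) Filter.atTop (nhds 1) := by
      refine Filter.Tendsto.congr' ?_ tendsto_const_nhds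
      filter_upwards [Filter.eventually_ge_atTop (i + 1)] with n hn
      exact (hx2 n i (by rw [hlen n]; omega)).symm
    exact tendsto_nhds_unique h1 h2
  have hzblock : IsBlockSeqOf e z := by
    refine ⟨fun n h0 => by have := hznorm n; rw [h0] at this; simp at this,
      ⟨fun k => (ℓ k).2, ?_, fun n => hzmem n⟩⟩
    intro m n hmn i hi j hj
    have h3 := hx3 (n + 1) m n hmn (by rw [hlen (n + 1)]; omega)
    rw [hlet (n + 1) m (by omega), hlet (n + 1) n (by omega)] at h3
    exact h3 i hi j hj
  -- apply the distortion hypothesis to the limit block sequence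
  obtain ⟨E, v, w, hvmem, hwmem, hv1, hw1, hvw⟩ := hNd z hzblock hznorm
  obtain ⟨nv, cv, gv, hgv⟩ := Submodule.mem_span_set'.mp hvmem
  obtain ⟨nw, cw, gw, hgw⟩ := Submodule.mem_span_set'.mp hwmem
  have hjv : ∀ i2 : Fin nv, ∃ j, j ∈ E ∧ z j = (gv i2 : V) := by
    intro i2
    obtain ⟨j, hj1, hj2⟩ := (gv i2).2
    exact ⟨j, by exact_mod_cast hj1, hj2⟩
  have hjw : ∀ i2 : Fin nw, ∃ j, j ∈ E ∧ z j = (gw i2 : V) := by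
    intro i2
    obtain ⟨j, hj1, hj2⟩ := (gw i2).2
    exact ⟨j, by exact_mod_cast hj1, hj2⟩
  choose jv hjvE hjvz using hjv
  choose jw hjwE hjwz using hjw
  obtain ⟨M, hM⟩ : ∃ M : ℕ, ∀ j ∈ E, j < M :=
    ⟨(E.sup id) + 1, fun j hj => Nat.lt_succ_of_le (Finset.le_sup (f := id) hj)⟩
  set va : ℕ → V := fun n => ∑ i2, cv i2 • x n (jv i2) with hva_def
  set wa : ℕ → V := fun n => ∑ i2, cw i2 • x n (jw i2) with hwa_def
  have hva : Filter.Tendsto va Filter.atTop (nhds v) := by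
    have h1 : Filter.Tendsto va Filter.atTop (nhds (∑ i2, cv i2 • z (jv i2))) :=
      tendsto_finset_sum _ (fun i2 _ => (hz (jv i2)).const_smul (cv i2))
    have h2 : (∑ i2, cv i2 • z (jv i2)) = v := by
      rw [← hgv]
      exact Finset.sum_congr rfl fun i2 _ => by rw [hjvz]
    rwa [h2] at h1
  have hwa : Filter.Tendsto wa Filter.atTop (nhds w) := by
    have h1 : Filter.Tendsto wa Filter.atTop (nhds (∑ i2, cw i2 • z (jw i2))) :=
      tendsto_finset_sum _ (fun i2 _ => (hz (jw i2)).const_smul (cw i2))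
    have h2 : (∑ i2, cw i2 • z (jw i2)) = w := by
      rw [← hgw]
      exact Finset.sum_congr rfl fun i2 _ => by rw [hjwz]
    rwa [h2] at h1
  have hvamem : ∀ n, M ≤ n → va n ∈
      Submodule.span ℝ (x n '' {i : ℕ | i < (f n).val.length}) := by
    intro n hn
    refine Submodule.sum_mem _ fun i2 _ => Submodule.smul_mem _ _ (Submodule.subset_span ?_)
    exact ⟨jv i2, by rw [Set.mem_setOf_eq, hlen n]; have := hM _ (hjvE i2); omega, rfl⟩
  have hwamem : ∀ n, M ≤ n → wa n ∈
      Submodule.span ℝ (x n '' {i : ℕ | i < (f n).val.length}) := by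
    intro n hn
    refine Submodule.sum_mem _ fun i2 _ => Submodule.smul_mem _ _ (Submodule.subset_span ?_)
    exact ⟨jw i2, by rw [Set.mem_setOf_eq, hlen n]; have := hM _ (hjwE i2); omega, rfl⟩
  have hxY : ∀ n i, i < (f n).val.length → x n i ∈ Submodule.span ℝ (Set.range e) :=
    fun n i hi => Submodule.span_mono (Set.image_subset_range e _) (hx1 n i hi)
  have hvaY : ∀ᶠ n in Filter.atTop, va n ∈ Submodule.span ℝ (Set.range e) := by
    filter_upwards [Filter.eventually_ge_atTop M] with n hn
    refine Submodule.sum_mem _ fun i2 _ => Submodule.smul_mem _ _ ?_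
    exact hxY n (jv i2) (by rw [hlen n]; have := hM _ (hjvE i2); omega)
  have hwaY : ∀ᶠ n in Filter.atTop, wa n ∈ Submodule.span ℝ (Set.range e) := by
    filter_upwards [Filter.eventually_ge_atTop M] with n hn
    refine Submodule.sum_mem _ fun i2 _ => Submodule.smul_mem _ _ ?_
    exact hxY n (jw i2) (by rw [hlen n]; have := hM _ (hjwE i2); omega)
  have hzY : ∀ i, z i ∈ Submodule.span ℝ (Set.range e) :=
    fun i => Submodule.span_mono (Set.image_subset_range e _) (hzmem i)
  have hvY : v ∈ Submodule.span ℝ (Set.range e) := by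
    rw [← hgv]
    refine Submodule.sum_mem _ fun i2 _ => Submodule.smul_mem _ _ ?_
    rw [← hjvz i2]
    exact hzY _
  have hwY : w ∈ Submodule.span ℝ (Set.range e) := by
    rw [← hgw]
    refine Submodule.sum_mem _ fun i2 _ => Submodule.smul_mem _ _ ?_
    rw [← hjwz i2]
    exact hzY _
  have hNva : Filter.Tendsto (fun n => N (va n)) Filter.atTop (nhds (N v)) :=
    tendsto_equivNorm hNe hvaY hvY hva
  have hNwa : Filter.Tendsto (fun n => N (wa n)) Filter.atTop (nhds (N w)) :=
    tendsto_equivNorm hNe hwaY hwY hwa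
  have hvnorm : Filter.Tendsto (fun n => ‖va n‖) Filter.atTop (nhds 1) := by
    have := hva.norm; rwa [hv1] at this
  have hwnorm : Filter.Tendsto (fun n => ‖wa n‖) Filter.atTop (nhds 1) := by
    have := hwa.norm; rwa [hw1] at this
  set vb : ℕ → V := fun n => ‖va n‖⁻¹ • va n with hvb_def
  set wb : ℕ → V := fun n => ‖wa n‖⁻¹ • wa n with hwb_def
  have hNvb : Filter.Tendsto (fun n => N (vb n)) Filter.atTop (nhds (N v)) := by
    have h1 : Filter.Tendsto (fun n => ‖va n‖⁻¹ * N (va n)) Filter.atTop (nhds (1⁻¹ * N v)) :=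
      (hvnorm.inv₀ one_ne_zero).mul hNva
    rw [inv_one, one_mul] at h1
    refine h1.congr' ?_
    filter_upwards [hvaY] with n hn
    rw [hvb_def]
    have h2 := hNe.2.1 (‖va n‖⁻¹) (va n) (mem_spanClosure_of_mem_span hn)
    rw [h2, abs_of_nonneg (inv_nonneg.mpr (norm_nonneg _))]
  have hNwb : Filter.Tendsto (fun n => N (wb n)) Filter.atTop (nhds (N w)) := by
    have h1 : Filter.Tendsto (fun n => ‖wa n‖⁻¹ * N (wa n)) Filter.atTop (nhds (1⁻¹ * N w)) :=
      (hwnorm.inv₀ one_ne_zero).mul hNwa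
    rw [inv_one, one_mul] at h1
    refine h1.congr' ?_
    filter_upwards [hwaY] with n hn
    rw [hwb_def]
    have h2 := hNe.2.1 (‖wa n‖⁻¹) (wa n) (mem_spanClosure_of_mem_span hn)
    rw [h2, abs_of_nonneg (inv_nonneg.mpr (norm_nonneg _))]
  have hevlt : ∀ᶠ n in Filter.atTop, t * N (wb n) < N (vb n) :=
    Filter.Tendsto.eventually_lt (hNwb.const_mul t) hNvb hvw
  have hvapos : ∀ᶠ n in Filter.atTop, (0 : ℝ) < ‖va n‖ :=
    hvnorm.eventually_const_lt (by norm_num)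
  have hwapos : ∀ᶠ n in Filter.atTop, (0 : ℝ) < ‖wa n‖ :=
    hwnorm.eventually_const_lt (by norm_num)
  obtain ⟨n, hn1, hn2, hn3, hn4⟩ :=
    (hevlt.and (hvapos.and (hwapos.and (Filter.eventually_ge_atTop M)))).exists
  refine hx5 n ⟨vb n, wb n, ?_, ?_, ?_, ?_, hn1⟩
  · exact Submodule.smul_mem _ _ (hvamem n hn4)
  · exact Submodule.smul_mem _ _ (hwamem n hn4)
  · rw [hvb_def, norm_smul, Real.norm_eq_abs, abs_of_nonneg (inv_nonneg.mpr (norm_nonneg _))]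
    exact inv_mul_cancel₀ (ne_of_gt hn2)
  · rw [hwb_def, norm_smul, Real.norm_eq_abs, abs_of_nonneg (inv_nonneg.mpr (norm_nonneg _))]
    exact inv_mul_cancel₀ (ne_of_gt hn3)

end UTreeWF

section MainAux

variable {V : Type*} [NormedAddCommGroup V] [NormedSpace ℝ V]

lemma getD_map_range {β : Type} {n i : ℕ} (h : i < n) (g : ℕ → β) (d : β) :
    ((List.range n).map g).getD i d = g i := by
  have h1 : i < ((List.range n).map g).length := by simpa using h
  rw [List.getD_eq_getElem _ _ h1]
  simp

lemma getD_map_take {α β : Type} (l : List α) {m i : ℕ} (him : i < m) (hil : i < l.length)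
    (g : α → β) (d : β) (d0 : α) : ((l.take m).map g).getD i d = g (l.getD i d0) := by
  have h1 : i < ((l.take m).map g).length := by
    simp only [List.length_map, List.length_take]
    omega
  rw [List.getD_eq_getElem _ _ h1, List.getD_eq_getElem _ _ hil]
  simp

lemma sorted_getD_lt {l : List ℕ} (hl : l.Pairwise (· < ·)) {i j : ℕ} (hij : i < j)
    (hj : j < l.length) : l.getD i 0 < l.getD j 0 := by
  have hi : i < l.length := lt_trans hij hj
  rw [List.getD_eq_getElem _ _ hi, List.getD_eq_getElem _ _ hj]
  exact List.pairwise_iff_getElem.mp hl i j hi hj hij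

/-- The letter of the image tree node determined by the prefix of length `k+1`. -/
def uLetterOf (e : ℕ → V) (u : ℕ → V) (Eu : ℕ → Finset ℕ) (l : List ℕ) (k : ℕ) : ULetter :=
  ((l.take (k + 1)).map (fun j => qIdxFun e (u j) k), Eu (l.getD k 0))

/-- The morphism sending increasing lists of indices to nodes of the universal tree. -/
def psiList (e : ℕ → V) (u : ℕ → V) (Eu : ℕ → Finset ℕ) (l : List ℕ) : List ULetter :=
  (List.range l.length).map (uLetterOf e u Eu l)

lemma psiList_append (e u : ℕ → V) (Eu : ℕ → Finset ℕ) (l : List ℕ) (m : ℕ) :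
    psiList e u Eu (l ++ [m]) = psiList e u Eu l ++ [uLetterOf e u Eu (l ++ [m]) l.length] := by
  unfold psiList
  rw [List.length_append, List.length_singleton, List.range_succ, List.map_append]
  congr 1
  · apply List.map_congr_left
    intro k hk
    have hk' : k < l.length := List.mem_range.mp hk
    unfold uLetterOf
    rw [List.take_append_of_le_length (by omega), List.getD_append _ _ _ _ hk']

lemma psiList_getD (e u : ℕ → V) (Eu : ℕ → Finset ℕ) (l : List ℕ) {i : ℕ} (hi : i < l.length) :
    (psiList e u Eu l).getD i ([], ∅) = uLetterOf e u Eu l i :=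
  getD_map_range hi _ _

end MainAux

section MainLemma

universe uu in
lemma exists_famDistortion {V : Type*} [NormedAddCommGroup V] [NormedSpace ℝ V] [CompleteSpace V]
    (SS : SchreierSystem) (e : ℕ → V) (t : ℝ) (hT : IsTDistortable e t) :
    ∃ ξ : Ordinal.{0}, ξ < omega1 ∧ ∃ N : V → ℝ, IsFamDistortion e (SS.S ξ) t N := by
  obtain ⟨N, hNe, hNd⟩ := hT
  have hwfU0 : WellFounded (extStep (uTree e N t)) := uTree_wf hNd hNe
  have hwfU : WellFounded (liftStep.{0} (uTree e N t)) := InvImage.wf _ hwfU0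
  set γ : Ordinal.{0} :=
    ⨆ b : ULift.{0} {l : List ULetter // l ∈ uTree e N t}, (hwfU.apply b).rank with hγdef
  have hγ : γ < omega1 := by
    refine Ordinal.iSup_lt_ord ?_ (fun b => rank_lt_omega1 _)
    have h1 : omega1.cof = Cardinal.aleph 1 := Cardinal.isRegular_aleph_one.cof_eq
    rw [h1]
    exact lt_of_le_of_lt Cardinal.mk_le_aleph0 Cardinal.aleph0_lt_aleph_one
  have hξω : γ + 1 < omega1 := by
    rw [Ordinal.add_one_eq_succ]
    exact omega1_isLimit.succ_lt hγ
  refine ⟨γ + 1, hξω, N, hNe, ?_⟩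
  intro u hu hnorm
  by_contra hbad
  obtain ⟨hne, Eu, hEublocks, hEuspan⟩ := hu
  set C : Set (Finset ℕ) := {F : Finset ℕ | noPairIn N t (u '' (F : Set ℕ))} with hCdef
  have hCS : ∀ F : Finset ℕ, F ∈ SS.S (γ + 1) → F ∈ C :=
    fun F hF hpair => hbad ⟨F, hF, hpair⟩
  have hChered : ∀ F G : Finset ℕ, F ⊆ G → G ∈ C → F ∈ C := by
    intro F G hFG hG hpair
    obtain ⟨v, w, hv, hw, h1, h2, h3⟩ := hpair
    have hsub : u '' (F : Set ℕ) ⊆ u '' (G : Set ℕ) :=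
      Set.image_mono (by exact_mod_cast hFG)
    exact hG ⟨v, w, Submodule.span_mono hsub hv, Submodule.span_mono hsub hw, h1, h2, h3⟩
  have huY : ∀ j, u j ∈ Submodule.span ℝ (Set.range e) :=
    fun j => Submodule.span_mono (Set.image_subset_range e _) (hEuspan j)
  have hψmem : ∀ l : List ℕ, l ∈ sTree C → psiList e u Eu l ∈ uTree e N t := by
    intro l hl
    have hplen : (psiList e u Eu l).length = l.length := by simp [psiList]
    refine ⟨fun i => u (l.getD i 0), ?_, ?_, ?_, ?_, ?_⟩
    · intro i hi
      rw [hplen] at hi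
      rw [psiList_getD e u Eu l hi]
      exact hEuspan (l.getD i 0)
    · intro i _
      exact hnorm _
    · intro i j hij hj a ha b hb
      rw [hplen] at hj
      rw [psiList_getD e u Eu l (lt_trans hij hj)] at ha
      rw [psiList_getD e u Eu l hj] at hb
      exact hEublocks _ _ (sorted_getD_lt hl.1 hij hj) a ha b hb
    · intro k hk i hik
      rw [hplen] at hk
      rw [psiList_getD e u Eu l hk]
      have heq : (uLetterOf e u Eu l k).1.getD i [] = qIdxFun e (u (l.getD i 0)) k := by
        unfold uLetterOf
        exact getD_map_take l (by omega) (lt_of_le_of_lt hik hk) _ _ 0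
      rw [heq]
      exact qIdxFun_spec e (huY _) k
    · rw [hplen]
      have hseteq : (fun i => u (l.getD i 0)) '' {i : ℕ | i < l.length}
          = u '' ((l.toFinset : Finset ℕ) : Set ℕ) := by
        ext y
        constructor
        · rintro ⟨i, hi, rfl⟩
          refine ⟨l.getD i 0, ?_, rfl⟩
          have hmem : l.getD i 0 ∈ l := by
            rw [List.getD_eq_getElem _ _ hi]
            exact List.getElem_mem _
          simpa using hmem
        · rintro ⟨a, ha, rfl⟩
          have ha' : a ∈ l := by simpa using ha
          obtain ⟨i, hi, hieq⟩ := List.mem_iff_getElem.mp ha'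
          refine ⟨i, hi, ?_⟩
          show u (l.getD i 0) = u a
          rw [List.getD_eq_getElem _ _ hi, hieq]
      rw [hseteq]
      exact hl.2
  let ψ : {l : List ℕ // l ∈ sTree C} → {l : List ULetter // l ∈ uTree e N t} :=
    fun a => ⟨psiList e u Eu a.val, hψmem a.val a.2⟩
  have hψstep : ∀ a b, extStep (sTree C) a b → extStep (uTree e N t) (ψ a) (ψ b) := by
    rintro a b ⟨m, hm⟩
    refine ⟨uLetterOf e u Eu (b.val ++ [m]) b.val.length, ?_⟩
    show psiList e u Eu a.val = psiList e u Eu b.val ++ _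
    rw [hm, psiList_append]
  let ψ' : ULift.{0} {l : List ℕ // l ∈ sTree C} →
      ULift.{0} {l : List ULetter // l ∈ uTree e N t} := fun a => ULift.up (ψ a.down)
  have hψstep' : ∀ a b, liftStep.{0} (sTree C) a b →
      liftStep.{0} (uTree e N t) (ψ' a) (ψ' b) :=
    fun a b h => hψstep a.down b.down h
  have hroot : ([] : List ℕ) ∈ sTree C := by
    refine ⟨List.Pairwise.nil, ?_⟩
    rw [List.toFinset_nil]
    exact hChered ∅ {1} (Finset.empty_subset _) (hCS {1} (SS.singleton_mem _ hξω 1 le_rfl))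
  have haccC : Acc (liftStep.{0} (sTree C)) (ULift.up ⟨[], hroot⟩) :=
    acc_of_relMap hψstep' (hwfU.apply (ψ' (ULift.up ⟨[], hroot⟩))) _ rfl
  have hlow : γ + 1 ≤ haccC.rank := by
    refine schreier_rank_lower_bound SS C (γ + 1) hξω [] hroot 1 (by simp) ?_ haccC
    intro F hF
    have h1 : F.image (· + 1) ∈ SS.S (γ + 1) := SS.shift_mem _ hξω 1 F hF
    have h2 : ([] : List ℕ).toFinset ∪ F.image (· + 1) = F.image (· + 1) := by simp
    rw [h2]
    exact hCS _ h1
  have hup : haccC.rank ≤ (hwfU.apply (ψ' (ULift.up ⟨[], hroot⟩))).rank :=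
    rank_le_of_relMap hψstep' haccC _
  have hle : (hwfU.apply (ψ' (ULift.up ⟨[], hroot⟩))).rank ≤ γ := by
    rw [hγdef]
    exact Ordinal.le_iSup
      (fun b : ULift.{0} {l : List ULetter // l ∈ uTree e N t} => (hwfU.apply b).rank)
      (ψ' (ULift.up ⟨[], hroot⟩))
  have hcon : γ + 1 ≤ γ := le_trans hlow (le_trans hup hle)
  exact absurd (lt_of_lt_of_le (ord_lt_add_one γ) hcon) (lt_irrefl γ)

end MainLemma

/-- A Banach space `X` with a Schauder basis and `t > 1` is not
`t`-distortable if and only if `D_t(X) = ω₁`. -/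
theorem statement4 {X : Type*} [NormedAddCommGroup X] [NormedSpace ℝ X] [CompleteSpace X]
    (SS : SchreierSystem) (e : ℕ → X) (he : IsSchauderBasis e) (t : ℝ) (ht : 1 < t) :
    ¬ IsTDistortable e t ↔ Dt SS e t = omega1 := by
  constructor
  · intro hnd
    have hA : {ξ : Ordinal | ξ < omega1 ∧ ∃ N : X → ℝ, IsFamDistortion e (SS.S ξ) t N} = ∅ := by
      ext ξ
      simp only [Set.mem_setOf_eq, Set.mem_empty_iff_false, iff_false, not_and]
      rintro hξ ⟨N, hNe, hNd⟩
      refine hnd ⟨N, hNe, fun u hu hn => ?_⟩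
      obtain ⟨E, _, v, w, h1, h2, h3, h4, h5⟩ := hNd u hu hn
      exact ⟨E, v, w, h1, h2, h3, h4, h5⟩
    rw [Dt, hA, Set.empty_union, csInf_singleton]
  · intro hD hT
    obtain ⟨ξ, hξ, hN⟩ := exists_famDistortion SS e t hT
    have hmem : ξ ∈ ({ξ : Ordinal | ξ < omega1 ∧ ∃ N : X → ℝ, IsFamDistortion e (SS.S ξ) t N}
        ∪ {omega1}) := Or.inl ⟨hξ, hN⟩
    have hle : Dt SS e t ≤ ξ := csInf_le' hmem
    rw [hD] at hle
    exact absurd (lt_of_le_of_lt hle hξ) (lt_irrefl _)
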